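/- Let ζ be a primitive 13th root of unity and let a, b be coprime integers. For 1 ≤ j < k ≤ 12, any common prime ideal divisor of (a + ζ^j b) and (a + ζ^k b) in ℤ[ζ] lies above 13. -/

import Mathlib

open NumberField

/-- Let `ζ` be a primitive 13th root of unity and `a, b` coprime integers. For
`1 ≤ j < k ≤ 12`, any (nonzero) prime ideal of `ℤ[ζ]` containing both `a + ζ^j b`
and `a + ζ^k b` lies above `13`. -/
theorem common_prime_divisor_lies_above_thirteen
    (ζ : 𝓞 (CyclotomicField 13 ℚ)) (hζ : IsPrimitiveRoot ζ 13)
    (a b : ℤ) (hab : IsCoprime a b)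
    (j k : ℕ) (hj : 1 ≤ j) (hjk : j < k) (hk : k ≤ 12)
    (P : Ideal (𝓞 (CyclotomicField 13 ℚ))) (hP : P.IsPrime) (hPne : P ≠ ⊥)
    (hPj : (a : 𝓞 (CyclotomicField 13 ℚ)) + ζ ^ j * b ∈ P)
    (hPk : (a : 𝓞 (CyclotomicField 13 ℚ)) + ζ ^ k * b ∈ P) :
    (13 : 𝓞 (CyclotomicField 13 ℚ)) ∈ P := by
  set K := CyclotomicField 13 ℚ
  have h1 : (ζ ^ j - ζ ^ k) * (b : 𝓞 K) ∈ P := by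
    have := P.sub_mem hPj hPk
    convert this using 1; ring
  have h2 : (ζ ^ j - ζ ^ k) * (a : 𝓞 K) ∈ P := by
    have := P.sub_mem (P.mul_mem_left (ζ ^ j) hPk) (P.mul_mem_left (ζ ^ k) hPj)
    convert this using 1; ring
  have hd : ζ ^ j - ζ ^ k ∈ P := by
    by_contra h
    have hbP : (b : 𝓞 K) ∈ P := (hP.mem_or_mem h1).resolve_left h
    have haP : (a : 𝓞 K) ∈ P := (hP.mem_or_mem h2).resolve_left h
    obtain ⟨u, v, huv⟩ := hab
    have h1mem : (1 : 𝓞 K) ∈ P := by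
      have := P.add_mem (P.mul_mem_left (u : 𝓞 K) haP) (P.mul_mem_left (v : 𝓞 K) hbP)
      have heq : ((u : 𝓞 K)) * a + (v : 𝓞 K) * b = 1 := by
        have := congrArg (fun z : ℤ => (z : 𝓞 K)) huv
        push_cast at this
        simpa using this
      rwa [heq] at this
    exact hP.ne_top (Ideal.eq_top_of_isUnit_mem P h1mem isUnit_one)
  have hfac : ζ ^ j - ζ ^ k = ζ ^ j * (1 - ζ ^ (k - j)) := by
    rw [mul_sub, mul_one, ← pow_add]
    congr 2
    omega
  have hu : IsUnit (ζ ^ j) := (hζ.isUnit (by norm_num)).pow j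
  have h3 : (1 : 𝓞 K) - ζ ^ (k - j) ∈ P := by
    rw [hfac] at hd
    exact (hP.mem_or_mem hd).resolve_left (fun hm => hP.ne_top (Ideal.eq_top_of_isUnit_mem P hm hu))
  have h4 : ζ ^ (k - j) - 1 ∈ P := by
    have := P.neg_mem h3
    simpa using this
  have hm : Nat.Coprime (k - j) 13 := by
    have h13 : Nat.Prime 13 := by norm_num
    have hlt : k - j < 13 := by omega
    have hpos : 0 < k - j := by omega
    have hnd : ¬ (13 ∣ (k - j)) := fun hdvd => by
      have := Nat.le_of_dvd hpos hdvd; omega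
    exact ((Nat.Prime.coprime_iff_not_dvd h13).mpr hnd).symm
  have hprim : IsPrimitiveRoot (ζ ^ (k - j)) 13 := hζ.pow_of_coprime _ hm
  have hprimK : IsPrimitiveRoot ((ζ ^ (k - j) : 𝓞 K) : K) (13 : ℕ) := by
    exact hprim.map_of_injective (f := (algebraMap (𝓞 K) K)) (RingOfIntegers.coe_injective)
  have : Fact (Nat.Prime (13 : ℕ)) := ⟨by norm_num⟩
  have : NeZero ((13 : ℕ) : ℚ) := ⟨by norm_num⟩
  have hdvd : (hprimK.toInteger - 1) ∣ ((13 : ℕ) : 𝓞 K) :=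
    hprimK.toInteger_sub_one_dvd_prime' (hcycl := CyclotomicField.isCyclotomicExtension 13 ℚ)
  have heq : hprimK.toInteger = ζ ^ (k - j) := by
    ext; rfl
  rw [heq] at hdvd
  obtain ⟨c, hc⟩ := hdvd
  have h13eq : (13 : 𝓞 K) = (ζ ^ (k - j) - 1) * c := by exact_mod_cast hc
  rw [h13eq]
  exact P.mul_mem_right c h4
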